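/- arXiv:1805.11397 — 2 statements merged into one kernel-verified Lean document; each statement's English description precedes it below -/
import Mathlib

section
/- The dual norm of ‖·‖_♭ on ℝ^n is given by ‖x‖_{♭,*} = max( ∑_{i : x_i > 0} x_i , ∑_{i : x_i ≤ 0} |x_i| ). -/
/-- The flat norm `‖x‖_♭` on `ℝ^n`. -/
noncomputable def flatNorm {n : ℕ} (x : Fin n → ℝ) : ℝ :=
  (⨆ i, max (x i) 0) + ⨆ i, max (-x i) 0

/-- The dual norm of `‖·‖_♭` is
`‖y‖_{♭,*} = max (∑_{i : y_i > 0} y_i) (∑_{i : y_i ≤ 0} |y_i|)`. -/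
theorem dual_flatNorm_eq (n : ℕ) (y : Fin n → ℝ) :
    sSup {t : ℝ | ∃ x : Fin n → ℝ, flatNorm x ≤ 1 ∧ t = ∑ i, x i * y i} =
      max (∑ i ∈ Finset.univ.filter (fun i => 0 < y i), y i)
        (∑ i ∈ Finset.univ.filter (fun i => y i ≤ 0), |y i|) := by
  classical
  set S : Set ℝ := {t : ℝ | ∃ x : Fin n → ℝ, flatNorm x ≤ 1 ∧ t = ∑ i, x i * y i} with hS
  set P := Finset.univ.filter (fun i : Fin n => 0 < y i) with hPdef
  set N := Finset.univ.filter (fun i : Fin n => y i ≤ 0) with hNdef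
  set M := max (∑ i ∈ P, y i) (∑ i ∈ N, |y i|) with hMdef
  have hP0 : 0 ≤ ∑ i ∈ P, y i :=
    Finset.sum_nonneg fun i hi => le_of_lt (Finset.mem_filter.mp hi).2
  have hN0 : 0 ≤ ∑ i ∈ N, |y i| := Finset.sum_nonneg fun i _ => abs_nonneg _
  have hM0 : 0 ≤ M := le_trans hP0 (le_max_left _ _)
  -- upper bound
  have hub : ∀ t ∈ S, t ≤ M := by
    rintro t ⟨x, hx, rfl⟩
    set a := ⨆ i, max (x i) 0 with ha
    set b := ⨆ i, max (-x i) 0 with hb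
    have ha0 : 0 ≤ a := Real.iSup_nonneg fun i => le_max_right _ _
    have hb0 : 0 ≤ b := Real.iSup_nonneg fun i => le_max_right _ _
    have hab : a + b ≤ 1 := hx
    have hxa : ∀ i, x i ≤ a := fun i =>
      le_trans (le_max_left _ _)
        (le_ciSup (f := fun i => max (x i) 0)
          (Set.Finite.bddAbove (Set.finite_range _)) i)
    have hxb : ∀ i, -b ≤ x i := by
      intro i
      have : -x i ≤ b :=
        le_trans (le_max_left _ _)
          (le_ciSup (f := fun i => max (-x i) 0)
            (Set.Finite.bddAbove (Set.finite_range _)) i)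
      linarith
    have hsplit : ∑ i, x i * y i = ∑ i ∈ P, x i * y i + ∑ i ∈ N, x i * y i := by
      have hN' : N = Finset.univ.filter (fun i => ¬ 0 < y i) := by
        simp [hNdef, not_lt]
      rw [hN', Finset.sum_filter_add_sum_filter_not]
    have h1 : ∑ i ∈ P, x i * y i ≤ a * ∑ i ∈ P, y i := by
      rw [Finset.mul_sum]
      refine Finset.sum_le_sum fun i hi => ?_
      have hyi : 0 ≤ y i := le_of_lt (Finset.mem_filter.mp hi).2
      exact mul_le_mul_of_nonneg_right (hxa i) hyi
    have h2 : ∑ i ∈ N, x i * y i ≤ b * ∑ i ∈ N, |y i| := by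
      rw [Finset.mul_sum]
      refine Finset.sum_le_sum fun i hi => ?_
      have hyi : y i ≤ 0 := (Finset.mem_filter.mp hi).2
      have habs : |y i| = -y i := abs_of_nonpos hyi
      rw [habs]
      nlinarith [hxb i]
    have hPM : ∑ i ∈ P, y i ≤ M := le_max_left _ _
    have hNM : ∑ i ∈ N, |y i| ≤ M := le_max_right _ _
    calc ∑ i, x i * y i = ∑ i ∈ P, x i * y i + ∑ i ∈ N, x i * y i := hsplit
      _ ≤ a * ∑ i ∈ P, y i + b * ∑ i ∈ N, |y i| := add_le_add h1 h2
      _ ≤ a * M + b * M := add_le_add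
          (mul_le_mul_of_nonneg_left hPM ha0) (mul_le_mul_of_nonneg_left hNM hb0)
      _ = (a + b) * M := by ring
      _ ≤ 1 * M := mul_le_mul_of_nonneg_right hab hM0
      _ = M := one_mul M
  have hbdd : BddAbove S := ⟨M, hub⟩
  -- membership of the two candidate values
  have hmemP : (∑ i ∈ P, y i) ∈ S := by
    refine ⟨fun i => if 0 < y i then 1 else 0, ?_, ?_⟩
    · have h1 : (⨆ i, max (if 0 < y i then (1:ℝ) else 0) 0) ≤ 1 := by
        refine Real.iSup_le (fun i => ?_) zero_le_one
        by_cases h : 0 < y i <;> simp [h]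
      have h2 : (⨆ i, max (-(if 0 < y i then (1:ℝ) else 0)) 0) ≤ 0 := by
        refine Real.iSup_le (fun i => ?_) le_rfl
        by_cases h : 0 < y i <;> simp [h]
      unfold flatNorm
      linarith
    · rw [hPdef, Finset.sum_filter]
      refine Finset.sum_congr rfl fun i _ => ?_
      by_cases h : 0 < y i <;> simp [h]
  have hmemN : (∑ i ∈ N, |y i|) ∈ S := by
    refine ⟨fun i => if y i ≤ 0 then -1 else 0, ?_, ?_⟩
    · have h1 : (⨆ i, max (if y i ≤ 0 then (-1:ℝ) else 0) 0) ≤ 0 := by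
        refine Real.iSup_le (fun i => ?_) le_rfl
        by_cases h : y i ≤ 0 <;> simp [h]
      have h2 : (⨆ i, max (-(if y i ≤ 0 then (-1:ℝ) else 0)) 0) ≤ 1 := by
        refine Real.iSup_le (fun i => ?_) zero_le_one
        by_cases h : y i ≤ 0 <;> simp [h]
      unfold flatNorm
      linarith
    · rw [hNdef, Finset.sum_filter]
      refine Finset.sum_congr rfl fun i _ => ?_
      by_cases h : y i ≤ 0 <;> simp [h, abs_of_nonpos]
  exact le_antisymm (Real.sSup_le hub hM0)
    (max_le (le_csSup hbdd hmemP) (le_csSup hbdd hmemN))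
end

section
/- Let Φ_1,...,Φ_{n-1} : ℝ^2 → ℝ^2 and suppose that for every unit vector τ ∈ ℝ^2 and every x, ‖(⟨Φ_1(x),τ⟩,...,⟨Φ_{n-1}(x),τ⟩)‖_{♭,*} ≤ 1. Then for all 1 ≤ i ≤ j−1 ≤ n−1 and all x, |∑_{k=i}^{j-1} Φ_k(x)| ≤ 1. -/
/-- The dual flat norm `‖y‖_{♭,*} = max (∑_{y_i > 0} y_i) (∑_{y_i ≤ 0} |y_i|)`. -/
noncomputable def dualFlatNorm {m : ℕ} (y : Fin m → ℝ) : ℝ :=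
  max (∑ i ∈ Finset.univ.filter (fun i => 0 < y i), y i)
    (∑ i ∈ Finset.univ.filter (fun i => y i ≤ 0), |y i|)

lemma sum_le_dualFlatNorm {m : ℕ} (y : Fin m → ℝ) (s : Finset (Fin m)) :
    ∑ k ∈ s, y k ≤ dualFlatNorm y := by
  have h1 : ∑ k ∈ s, y k ≤ ∑ k ∈ s.filter (fun i => 0 < y i), y k := by
    rw [← Finset.sum_filter_add_sum_filter_not s (fun i => 0 < y i)]
    have : ∑ k ∈ s.filter (fun i => ¬ 0 < y i), y k ≤ 0 :=
      Finset.sum_nonpos (fun k hk => le_of_not_gt (Finset.mem_filter.mp hk).2)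
    linarith
  have h2 : ∑ k ∈ s.filter (fun i => 0 < y i), y k ≤
      ∑ k ∈ Finset.univ.filter (fun i => 0 < y i), y k := by
    apply Finset.sum_le_sum_of_subset_of_nonneg
    · intro k hk
      simp only [Finset.mem_filter] at hk ⊢
      exact ⟨Finset.mem_univ k, hk.2⟩
    · intro k hk _
      exact le_of_lt (Finset.mem_filter.mp hk).2
  exact le_trans (h1.trans h2) (le_max_left _ _)

/-- If the comass bound `‖(⟨Φ_1(x),τ⟩, …, ⟨Φ_m(x),τ⟩)‖_{♭,*} ≤ 1` holds for all
unit vectors `τ` and all `x`, then every consecutive sum of the fields satisfies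
`|∑_{k=i}^{j} Φ_k(x)| ≤ 1`. -/
theorem comass_bound_implies_consecutive_bound (m : ℕ)
    (Φ : Fin m → EuclideanSpace ℝ (Fin 2) → EuclideanSpace ℝ (Fin 2))
    (h : ∀ (x τ : EuclideanSpace ℝ (Fin 2)), ‖τ‖ = 1 →
      dualFlatNorm (fun k => (inner ℝ (Φ k x) τ : ℝ)) ≤ 1) :
    ∀ i j : Fin m, i ≤ j → ∀ x, ‖∑ k ∈ Finset.Icc i j, Φ k x‖ ≤ 1 := by
  intro i j _ x
  set S := ∑ k ∈ Finset.Icc i j, Φ k x with hS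
  rcases eq_or_ne S 0 with h0 | h0
  · simp [h0]
  · set τ := (‖S‖⁻¹ : ℝ) • S with hτ
    have hnorm : ‖τ‖ = 1 := by
      rw [hτ, norm_smul, norm_inv, norm_norm,
        inv_mul_cancel₀ (norm_ne_zero_iff.mpr h0)]
    have key : (inner ℝ S τ : ℝ) = ‖S‖ := by
      rw [hτ, inner_smul_right, real_inner_self_eq_norm_sq]
      field_simp [norm_ne_zero_iff.mpr h0]
    have hsum : ∑ k ∈ Finset.Icc i j, (inner ℝ (Φ k x) τ : ℝ) = ‖S‖ := by
      rw [← key, hS, sum_inner]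
    calc ‖S‖ = ∑ k ∈ Finset.Icc i j, (inner ℝ (Φ k x) τ : ℝ) := hsum.symm
      _ ≤ dualFlatNorm (fun k => (inner ℝ (Φ k x) τ : ℝ)) :=
          sum_le_dualFlatNorm _ _
      _ ≤ 1 := h x τ hnorm
end
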